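/- Let F : ℕ → ℝ≥0 be bounded, Z = Σ_{j∈ℕ} e^{−j²/2}, and define h(k, b) = [b]·F(k) + [¬b]·Σ_{j∈ℕ} (e^{−j²/2}/Z)·F(j), and g(k) = e^{−k(k−1)/2}·h(k,true) + (1 − e^{−k(k−1)/2})·h(k,false). Then Σ_{k∈ℕ} (e^{−1/2})^k · (1 − e^{−1/2}) · g(k) = Σ_{k∈ℕ} (e^{−k²/2}/Z) · F(k). -/

import Mathlib

theorem gaussian_integer_part_expectation
    (F : ℕ → ℝ)
    (hnonneg : ∀ n, 0 ≤ F n)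
    (hbdd : ∃ M : ℝ, ∀ n, F n ≤ M)
    (Z : ℝ) (hZ : Z = ∑' j : ℕ, Real.exp (-(j : ℝ) ^ 2 / 2))
    (h : ℕ → Bool → ℝ)
    (hh : ∀ k b, h k b = (if b then (1:ℝ) else 0) * F k
        + (if ¬ b then (1:ℝ) else 0) * ∑' j : ℕ, (Real.exp (-(j : ℝ) ^ 2 / 2) / Z) * F j)
    (g : ℕ → ℝ)
    (hg : ∀ k, g k = Real.exp (-((k : ℝ) * ((k : ℝ) - 1)) / 2) * h k true
        + (1 - Real.exp (-((k : ℝ) * ((k : ℝ) - 1)) / 2)) * h k false) :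
    (∑' k : ℕ, (Real.exp (-(1/2))) ^ k * (1 - Real.exp (-(1/2))) * g k)
      = ∑' k : ℕ, (Real.exp (-(k : ℝ) ^ 2 / 2) / Z) * F k := by
  obtain ⟨M, hM⟩ := hbdd
  set a : ℝ := Real.exp (-(1/2)) with ha_def
  have ha0 : 0 < a := Real.exp_pos _
  have ha1 : a < 1 := by
    rw [ha_def, show (1:ℝ) = Real.exp 0 by simp]
    exact Real.exp_lt_exp.mpr (by norm_num)
  set S : ℝ := ∑' j : ℕ, (Real.exp (-(j : ℝ) ^ 2 / 2) / Z) * F j with hS_def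
  have key : ∀ k : ℕ, a ^ k * Real.exp (-((k:ℝ) * ((k:ℝ) - 1)) / 2)
      = Real.exp (-(k:ℝ)^2/2) := by
    intro k
    rw [ha_def, ← Real.exp_nat_mul, ← Real.exp_add]
    congr 1; ring
  have hsum1 : Summable (fun k : ℕ => Real.exp (-(k:ℝ)^2/2)) := by
    apply Summable.of_nonneg_of_le (fun k => (Real.exp_pos _).le) (fun k => ?_)
      (summable_geometric_of_lt_one ha0.le ha1)
    rw [ha_def, ← Real.exp_nat_mul]
    apply Real.exp_le_exp.mpr
    have hk : (k : ℝ) ≤ (k:ℝ)^2 := by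
      have : k ≤ k ^ 2 := Nat.le_self_pow (by norm_num) k
      exact_mod_cast this
    linarith
  have hZpos : 0 < Z := by
    rw [hZ]
    exact Summable.tsum_pos hsum1 (fun i => (Real.exp_pos _).le) 0 (Real.exp_pos _)
  have hsumF : Summable (fun k : ℕ => Real.exp (-(k:ℝ)^2/2) * F k) := by
    apply Summable.of_nonneg_of_le
      (fun k => mul_nonneg (Real.exp_pos _).le (hnonneg k))
      (fun k => mul_le_mul_of_nonneg_left (hM k) (Real.exp_pos _).le)
      (hsum1.mul_right M)
  set T : ℝ := ∑' k : ℕ, Real.exp (-(k:ℝ)^2/2) * F k with hT_def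
  have hZS : Z * S = T := by
    have : S = T * Z⁻¹ := by
      rw [hS_def, hT_def, ← tsum_mul_right]
      congr 1; funext j; field_simp
    rw [this]
    field_simp
  have hterm : ∀ k : ℕ, a ^ k * (1 - a) * g k
      = ((1-a) * (Real.exp (-(k:ℝ)^2/2) * F k)
        - (1-a) * (Real.exp (-(k:ℝ)^2/2) * S)) + (1-a) * S * a ^ k := by
    intro k
    have htrue : h k true = F k := by rw [hh]; simp
    have hfalse : h k false = S := by rw [hh]; simp
    rw [hg, htrue, hfalse]
    linear_combination ((1-a) * (F k - S)) * key k
  have hf1 : Summable (fun k : ℕ => (1-a) * (Real.exp (-(k:ℝ)^2/2) * F k)) :=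
    hsumF.mul_left _
  have hf2 : Summable (fun k : ℕ => (1-a) * (Real.exp (-(k:ℝ)^2/2) * S)) :=
    (hsum1.mul_right S).mul_left _
  have hf3 : Summable (fun k : ℕ => (1-a) * S * a ^ k) :=
    (summable_geometric_of_lt_one ha0.le ha1).mul_left _
  calc (∑' k : ℕ, a ^ k * (1 - a) * g k)
      = ∑' k : ℕ, (((1-a) * (Real.exp (-(k:ℝ)^2/2) * F k)
        - (1-a) * (Real.exp (-(k:ℝ)^2/2) * S)) + (1-a) * S * a ^ k) := by
        congr 1; funext k; exact hterm k
    _ = ((∑' k : ℕ, (1-a) * (Real.exp (-(k:ℝ)^2/2) * F k))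
        - ∑' k : ℕ, (1-a) * (Real.exp (-(k:ℝ)^2/2) * S))
        + ∑' k : ℕ, (1-a) * S * a ^ k := by
        rw [Summable.tsum_add (hf1.sub hf2) hf3, Summable.tsum_sub hf1 hf2]
    _ = (1-a) * T - (1-a) * (Z * S) + (1-a) * S * (1-a)⁻¹ := by
        rw [tsum_mul_left, tsum_mul_left, tsum_mul_left,
          tsum_mul_right, tsum_geometric_of_lt_one ha0.le ha1, ← hZ, ← hT_def]
    _ = S := by
        rw [hZS]
        have : (1:ℝ) - a ≠ 0 := by linarith
        field_simp
        ring
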